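/- Let a, b ∈ ℝ, w > 0, p > 0, u : ℕ → ℝ, and let (Ω, 𝓕, P) be a probability space carrying a random variable x₀ with law gaussianReal m p and an independent sequence (ω_k) of mutually independent random variables with ω_k having law gaussianReal 0 w, all independent of x₀. Define x_{k+1} = a · x_k + b · u(k) + ω_k. Then for every k, the law of x_k is gaussianReal (a^k m + ∑_{l=0}^{k−1} a^{k−l−1} b u(l)) (a^{2k} p + ∑_{l=0}^{k−1} a^{2l} w). -/

import Mathlib

open MeasureTheory ProbabilityTheory

open Real
open scoped ENNReal NNReal

lemma gaussianPDFReal_mul_eq (μ₁ μ₂ : ℝ) {v₁ v₂ : ℝ≥0} (h₁ : v₁ ≠ 0) (h₂ : v₂ ≠ 0) (z : ℝ) :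
    (fun x : ℝ => gaussianPDFReal μ₁ v₁ x * gaussianPDFReal μ₂ v₂ (z - x))
      = fun x : ℝ =>
        ((√(2 * π * v₁))⁻¹ * (√(2 * π * v₂))⁻¹
          * rexp (- (z - (μ₁ + μ₂))^2 / (2 * ((v₁ : ℝ) + v₂))))
        * rexp (-(((v₁ : ℝ) + v₂) / (2 * v₁ * v₂))
            * (x - ((v₁ * (z - μ₂) + v₂ * μ₁) / ((v₁ : ℝ) + v₂)))^2) := by
  have hs₁ : (0:ℝ) < v₁ := lt_of_le_of_ne v₁.coe_nonneg (by exact_mod_cast (Ne.symm h₁))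
  have hs₂ : (0:ℝ) < v₂ := lt_of_le_of_ne v₂.coe_nonneg (by exact_mod_cast (Ne.symm h₂))
  have hs : (0:ℝ) < (v₁:ℝ) + v₂ := by linarith
  funext x
  simp only [gaussianPDFReal]
  rw [mul_mul_mul_comm, ← Real.exp_add, mul_assoc (_ * _), ← Real.exp_add]
  congr 2
  field_simp
  ring

lemma integrable_gaussianPDFReal_mul (μ₁ μ₂ : ℝ) {v₁ v₂ : ℝ≥0} (h₁ : v₁ ≠ 0) (h₂ : v₂ ≠ 0)
    (z : ℝ) :
    Integrable (fun x : ℝ => gaussianPDFReal μ₁ v₁ x * gaussianPDFReal μ₂ v₂ (z - x)) := by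
  have hs₁ : (0:ℝ) < v₁ := lt_of_le_of_ne v₁.coe_nonneg (by exact_mod_cast (Ne.symm h₁))
  have hs₂ : (0:ℝ) < v₂ := lt_of_le_of_ne v₂.coe_nonneg (by exact_mod_cast (Ne.symm h₂))
  rw [gaussianPDFReal_mul_eq μ₁ μ₂ h₁ h₂ z]
  have hα : (0:ℝ) < ((v₁ : ℝ) + v₂) / (2 * v₁ * v₂) := by positivity
  exact ((integrable_exp_neg_mul_sq hα).comp_sub_right _).const_mul _

lemma integral_gaussianPDFReal_mul (μ₁ μ₂ : ℝ) {v₁ v₂ : ℝ≥0} (h₁ : v₁ ≠ 0) (h₂ : v₂ ≠ 0)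
    (z : ℝ) :
    ∫ x : ℝ, gaussianPDFReal μ₁ v₁ x * gaussianPDFReal μ₂ v₂ (z - x)
      = gaussianPDFReal (μ₁ + μ₂) (v₁ + v₂) z := by
  have hs₁ : (0:ℝ) < v₁ := lt_of_le_of_ne v₁.coe_nonneg (by exact_mod_cast (Ne.symm h₁))
  have hs₂ : (0:ℝ) < v₂ := lt_of_le_of_ne v₂.coe_nonneg (by exact_mod_cast (Ne.symm h₂))
  have hs : (0:ℝ) < (v₁:ℝ) + v₂ := by linarith
  have hπ : (0:ℝ) < π := pi_pos
  rw [gaussianPDFReal_mul_eq μ₁ μ₂ h₁ h₂ z]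
  rw [MeasureTheory.integral_const_mul]
  rw [show (fun x : ℝ => rexp (-(((v₁ : ℝ) + v₂) / (2 * v₁ * v₂))
      * (x - ((v₁ * (z - μ₂) + v₂ * μ₁) / ((v₁ : ℝ) + v₂)))^2))
    = (fun x : ℝ => (fun y => rexp (-(((v₁ : ℝ) + v₂) / (2 * v₁ * v₂)) * y ^ 2))
        (x - ((v₁ * (z - μ₂) + v₂ * μ₁) / ((v₁ : ℝ) + v₂)))) from rfl]
  rw [integral_sub_right_eq_self (fun y => rexp (-(((v₁ : ℝ) + v₂) / (2 * v₁ * v₂)) * y ^ 2)),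
    integral_gaussian]
  simp only [gaussianPDFReal]
  have hcast : ((v₁ + v₂ : ℝ≥0) : ℝ) = (v₁ : ℝ) + v₂ := by push_cast; ring
  rw [hcast]
  rw [mul_comm, ← mul_assoc, mul_comm _ ((√(2 * π * v₁))⁻¹ * (√(2 * π * v₂))⁻¹)]
  congr 1
  rw [← Real.sqrt_inv, ← Real.sqrt_inv, ← Real.sqrt_inv, ← Real.sqrt_mul (by positivity),
    ← Real.sqrt_mul (by positivity)]
  congr 1
  field_simp

lemma lintegral_gaussianPDF_mul (μ₁ μ₂ : ℝ) {v₁ v₂ : ℝ≥0} (h₁ : v₁ ≠ 0) (h₂ : v₂ ≠ 0) (z : ℝ) :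
    ∫⁻ x : ℝ, gaussianPDF μ₁ v₁ x * gaussianPDF μ₂ v₂ (z - x)
      = gaussianPDF (μ₁ + μ₂) (v₁ + v₂) z := by
  simp_rw [gaussianPDF, ← ENNReal.ofReal_mul (gaussianPDFReal_nonneg _ _ _)]
  rw [← ofReal_integral_eq_lintegral_ofReal (integrable_gaussianPDFReal_mul μ₁ μ₂ h₁ h₂ z)
    (ae_of_all _ fun x => mul_nonneg (gaussianPDFReal_nonneg _ _ _)
      (gaussianPDFReal_nonneg _ _ _)),
    integral_gaussianPDFReal_mul μ₁ μ₂ h₁ h₂ z]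

/-- Convolution of Gaussian measures. -/
lemma gaussianReal_conv (μ₁ μ₂ : ℝ) (v₁ v₂ : ℝ≥0) (h₂ : v₂ ≠ 0) :
    Measure.conv (gaussianReal μ₁ v₁) (gaussianReal μ₂ v₂) = gaussianReal (μ₁ + μ₂) (v₁ + v₂) := by
  rw [show Measure.conv (gaussianReal μ₁ v₁) (gaussianReal μ₂ v₂)
      = Measure.map (fun p : ℝ × ℝ => p.1 + p.2) ((gaussianReal μ₁ v₁).prod (gaussianReal μ₂ v₂))
    from rfl]
  by_cases h₁ : v₁ = 0
  · rw [h₁, gaussianReal_zero_var]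
    rw [Measure.dirac_prod, Measure.map_map measurable_add measurable_prodMk_left]
    have : ((fun p : ℝ × ℝ => p.1 + p.2) ∘ Prod.mk μ₁) = (fun y => μ₁ + y) := rfl
    rw [this, gaussianReal_map_const_add, zero_add, add_comm μ₂ μ₁]
  · ext s hs
    have hadd : Measurable (fun p : ℝ × ℝ => p.1 + p.2) := measurable_add
    rw [Measure.map_apply hadd hs,
      gaussianReal_of_var_ne_zero μ₁ h₁, gaussianReal_of_var_ne_zero μ₂ h₂]
    set f := gaussianPDF μ₁ v₁
    set g := gaussianPDF μ₂ v₂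
    have hf : Measurable f := measurable_gaussianPDF _ _
    have hg : Measurable g := measurable_gaussianPDF _ _
    rw [Measure.prod_apply (hadd hs)]
    have hslice : ∀ x : ℝ, (volume.withDensity g) (Prod.mk x ⁻¹' ((fun p : ℝ × ℝ => p.1 + p.2) ⁻¹' s))
        = ∫⁻ z, Set.indicator s (fun z => g (z - x)) z := by
      intro x
      have hpre : (Prod.mk x ⁻¹' ((fun p : ℝ × ℝ => p.1 + p.2) ⁻¹' s)) = (fun y => x + y) ⁻¹' s := rfl
      rw [hpre, withDensity_apply _ ((measurable_const_add x) hs),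
        ← lintegral_indicator ((measurable_const_add x) hs)]
      rw [← (measurePreserving_sub_right volume x).lintegral_comp
        ((hg.indicator ((measurable_const_add x) hs)))]
      congr 1
      funext z
      by_cases hz : z ∈ s
      · have hmem : z - x ∈ (fun y => x + y) ⁻¹' s := by
          simp [hz]
        rw [Set.indicator_of_mem hmem, Set.indicator_of_mem hz]
      · have hmem : z - x ∉ (fun y => x + y) ⁻¹' s := by
          simp [hz]
        rw [Set.indicator_of_notMem hmem, Set.indicator_of_notMem hz]
    simp_rw [hslice]
    have hGmeas : Measurable (fun p : ℝ × ℝ => Set.indicator s (fun z => g (z - p.1)) p.2) := by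
      have heq : (fun p : ℝ × ℝ => Set.indicator s (fun z => g (z - p.1)) p.2)
          = Set.indicator {p : ℝ × ℝ | p.2 ∈ s} (fun p : ℝ × ℝ => g (p.2 - p.1)) := by
        funext p
        by_cases hp : p.2 ∈ s <;> simp [Set.indicator, hp]
      rw [heq]
      exact (hg.comp (measurable_snd.sub measurable_fst)).indicator (measurable_snd hs)
    have hinner : Measurable (fun x : ℝ => ∫⁻ z, Set.indicator s (fun z => g (z - x)) z) :=
      Measurable.lintegral_prod_right
        (f := fun x z : ℝ => Set.indicator s (fun z => g (z - x)) z) hGmeas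
    rw [lintegral_withDensity_eq_lintegral_mul volume hf hinner]
    have step1 : ∫⁻ x, (f * fun x => ∫⁻ z, Set.indicator s (fun z => g (z - x)) z) x ∂volume
        = ∫⁻ x, ∫⁻ z, f x * Set.indicator s (fun z => g (z - x)) z ∂volume ∂volume := by
      refine lintegral_congr fun x => ?_
      simp only [Pi.mul_apply]
      rw [lintegral_const_mul' _ _ (by simp only [f, gaussianPDF]; exact ENNReal.ofReal_ne_top)]
    have hFmeas : Measurable (Function.uncurry fun x z : ℝ =>
        f x * Set.indicator s (fun z => g (z - x)) z) :=
      (hf.comp measurable_fst).mul hGmeas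
    rw [step1, lintegral_lintegral_swap hFmeas.aemeasurable]
    have step2 : ∀ z : ℝ, ∫⁻ x, f x * Set.indicator s (fun z => g (z - x)) z ∂volume
        = Set.indicator s (fun z => gaussianPDF (μ₁ + μ₂) (v₁ + v₂) z) z := by
      intro z
      by_cases hz : z ∈ s
      · simp only [Set.indicator_of_mem hz]
        exact lintegral_gaussianPDF_mul μ₁ μ₂ h₁ h₂ z
      · simp [Set.indicator_of_notMem hz]
    simp_rw [step2]
    rw [lintegral_indicator hs, gaussianReal_apply _ (by simp [h₂]) s]

lemma map_add_of_indepFun {Ω : Type*} [MeasurableSpace Ω] (P : Measure Ω)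
    [IsProbabilityMeasure P] {X Y : Ω → ℝ} (hX : Measurable X) (hY : Measurable Y)
    (h : IndepFun X Y P) :
    P.map (fun s => X s + Y s) = Measure.conv (P.map X) (P.map Y) := by
  have : (fun s => X s + Y s) = (fun p : ℝ × ℝ => p.1 + p.2) ∘ (fun s => (X s, Y s)) := rfl
  rw [this, ← Measure.map_map measurable_add (hX.prodMk hY),
    (indepFun_iff_map_prod_eq_prod_map_map hX.aemeasurable hY.aemeasurable).mp h]
  rfl

/-- The scalar instance of the propagation equations (21a)-(21b): for the linear
stochastic system `x(k+1) = a x(k) + b u(k) + ω(k)` with `x(0) ∼ N(m, p)` and the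
`ω(k) ∼ N(0, w)` mutually independent and independent of `x(0)`, the law of `x(k)` is
Gaussian with mean `a^k m + ∑_{l<k} a^{k-l-1} b u(l)` and variance
`a^{2k} p + ∑_{l<k} a^{2l} w`. -/
theorem stmt14 {Ω : Type*} [MeasurableSpace Ω] (P : Measure Ω) [IsProbabilityMeasure P]
    (a b m w p : ℝ) (hw : 0 < w) (hp : 0 < p) (u : ℕ → ℝ)
    (x0 : Ω → ℝ) (hx0meas : Measurable x0)
    (ω : ℕ → Ω → ℝ) (hωmeas : ∀ k, Measurable (ω k))
    (hx0law : P.map x0 = gaussianReal m ⟨p, hp.le⟩)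
    (hωlaw : ∀ k, P.map (ω k) = gaussianReal 0 ⟨w, hw.le⟩)
    (hindep : iIndepFun
      (fun i : ℕ => Nat.casesOn i x0 ω : ℕ → Ω → ℝ) P)
    (x : ℕ → Ω → ℝ) (hx0 : x 0 = x0)
    (hxrec : ∀ k, x (k + 1) = fun s => a * x k s + b * u k + ω k s) :
    ∀ k : ℕ, P.map (x k) = gaussianReal
      (a ^ k * m + ∑ l ∈ Finset.range k, a ^ (k - l - 1) * b * u l)
      ⟨a ^ (2 * k) * p + ∑ l ∈ Finset.range k, a ^ (2 * l) * w, by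
        refine add_nonneg (mul_nonneg ?_ hp.le)
          (Finset.sum_nonneg fun l _ => mul_nonneg ?_ hw.le) <;>
        · rw [pow_mul]; positivity⟩ := by
  set Y : ℕ → Ω → ℝ := (fun i : ℕ => Nat.casesOn i x0 ω : ℕ → Ω → ℝ) with hY
  have hYmeas : ∀ i, Measurable (Y i) := by
    intro i
    cases i with
    | zero => exact hx0meas
    | succ n => exact hωmeas n
  have hxmeas : ∀ k, Measurable (x k) := by
    intro k
    induction k with
    | zero => rw [hx0]; exact hx0meas
    | succ n ih =>
      rw [hxrec n]
      exact (ih.const_mul a).add_const (b * u n) |>.add (hωmeas n)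
  -- x k is a measurable function of (Y i)_{i ≤ k}
  have hrep : ∀ k : ℕ, ∃ g : ((i : Finset.range (k+1)) → ℝ) → ℝ,
      Measurable g ∧ ∀ s, x k s = g (fun i => Y i.1 s) := by
    intro k
    induction k with
    | zero =>
      refine ⟨fun v => v ⟨0, by simp⟩, measurable_pi_apply _, fun s => ?_⟩
      rw [hx0]
      rfl
    | succ n ih =>
      obtain ⟨g, hg, hgs⟩ := ih
      refine ⟨fun v => a * g (fun i => v ⟨i.1, by
          have := Finset.mem_range.mp i.2
          exact Finset.mem_range.mpr (by omega)⟩) + b * u n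
          + v ⟨n+1, Finset.mem_range.mpr (by omega)⟩, ?_, fun s => ?_⟩
      · refine Measurable.add ?_ (measurable_pi_apply _)
        refine Measurable.add_const ?_ _
        exact (hg.comp (measurable_pi_lambda _ fun i => measurable_pi_apply _)).const_mul a
      · rw [hxrec n]
        simp only
        rw [hgs s]
  have hIndep : ∀ k, IndepFun (x k) (ω k) P := by
    intro k
    obtain ⟨g, hg, hgs⟩ := hrep k
    have hdis : Disjoint (Finset.range (k+1)) ({k+1} : Finset ℕ) := by
      simp only [Finset.disjoint_left, Finset.mem_range, Finset.mem_singleton]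
      omega
    have h1 := hindep.indepFun_finset (Finset.range (k+1)) {k+1} hdis hYmeas
    have h2 := h1.comp hg
      (measurable_pi_apply (⟨k+1, Finset.mem_singleton_self _⟩ : ({k+1} : Finset ℕ)))
    have hx_eq : x k = g ∘ (fun s (i : Finset.range (k+1)) => Y i.1 s) := funext hgs
    have hω_eq : ω k = (fun v : ({k+1} : Finset ℕ) → ℝ =>
        v ⟨k+1, Finset.mem_singleton_self _⟩) ∘ (fun s (i : ({k+1} : Finset ℕ)) => Y i.1 s) := rfl
    rw [hx_eq, hω_eq]
    exact h2
  intro k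
  induction k with
  | zero =>
    rw [hx0, hx0law]
    congr 1
    · simp
    · ext
      simp
  | succ k ih =>
    have haff : IndepFun (fun s => a * x k s + b * u k) (ω k) P :=
      (hIndep k).comp (((measurable_id.const_mul a).add_const (b * u k))) measurable_id
    have hmap1 : P.map (fun s => a * x k s + b * u k)
        = gaussianReal (a * (a ^ k * m + ∑ l ∈ Finset.range k, a ^ (k - l - 1) * b * u l) + b * u k)
          (⟨a^2, sq_nonneg _⟩ * ⟨a ^ (2 * k) * p + ∑ l ∈ Finset.range k, a ^ (2 * l) * w, by
            refine add_nonneg (mul_nonneg ?_ hp.le)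
              (Finset.sum_nonneg fun l _ => mul_nonneg ?_ hw.le) <;>
            · rw [pow_mul]; positivity⟩) := by
      have : (fun s => a * x k s + b * u k)
          = ((· + b * u k) ∘ ((a * ·) ∘ x k)) := rfl
      rw [this, ← Measure.map_map (measurable_add_const _)
          ((measurable_const_mul a).comp (hxmeas k)),
        ← Measure.map_map (measurable_const_mul a) (hxmeas k), ih]
      erw [gaussianReal_map_const_mul, gaussianReal_map_add_const]
      rfl
    rw [hxrec k,
      map_add_of_indepFun P ((hxmeas k).const_mul a |>.add_const _) (hωmeas k) haff,
      hmap1, hωlaw k]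
    erw [gaussianReal_conv _ _ _ _ (by exact ne_of_gt hw)]
    congr 1
    · -- means
      have hsum : ∀ l ∈ Finset.range k,
          a * (a ^ (k - l - 1) * b * u l) = a ^ (k + 1 - l - 1) * b * u l := by
        intro l hl
        have hl' := Finset.mem_range.mp hl
        rw [show k + 1 - l - 1 = (k - l - 1) + 1 by omega, pow_succ]
        ring
      rw [add_zero, Finset.sum_range_succ, show k + 1 - k - 1 = 0 from by omega, mul_add,
        Finset.mul_sum, Finset.sum_congr rfl hsum, pow_succ]
      ring
    · -- variances
      ext
      push_cast
      change (a ^ 2 * (a ^ (2 * k) * p + ∑ l ∈ Finset.range k, a ^ (2 * l) * w) + w : ℝ)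
        = a ^ (2 * (k + 1)) * p + ∑ l ∈ Finset.range (k + 1), a ^ (2 * l) * w
      rw [Finset.sum_range_succ']
      simp only [pow_zero, one_mul, mul_zero, Nat.mul_succ]
      have h2 : ∀ l ∈ Finset.range k, a ^ (2 * l + 2) * w = a ^ 2 * (a ^ (2 * l) * w) := by
        intro l _
        rw [pow_add]
        ring
      rw [Finset.sum_congr rfl h2, ← Finset.mul_sum, pow_add]
      ring
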